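/- Let C ⊆ ℝ^n and D ⊆ ℝ^m be nonempty compact convex sets, L ∈ ℝ^{m×n}, s ∈ ℝ^n, b ∈ ℝ^m, τ > 0. Consider one step of the primal Douglas–Rachford update from (ū, w̄) ∈ ℝ^n × ℝ^m: u := Π_C(ū − τs), w'' := Π_D((1/τ)(w̄ − b)), u' := (I + LᵀL)^{−1}((2u − ū) + Lᵀ(w̄ − 2τ w'')), w' := Lu', ū⁺ := ū + u' − u, w̄⁺ := w' + τ w''; and one step of the dual Douglas–Rachford update with step size τ_D := 1/τ from (v̄, z̄) ∈ ℝ^m × ℝ^n: v := Π_D(v̄ − τ_D b), z'' := Π_C((1/τ_D)(z̄ − s)), v' := (I + LLᵀ)^{−1}((2v − v̄) − L(z̄ − 2τ_D z'')), z' := −Lᵀv', v̄⁺ := v̄ + v' − v, z̄⁺ := z' + τ_D z''. If ū = τ·z̄ and w̄ = τ·v̄, then u = z'', w'' = v, ū⁺ = τ·z̄⁺, and w̄⁺ = τ·v̄⁺. -/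

import Mathlib

open ContinuousLinearMap in
lemma aux_inj {n m : ℕ} (L : EuclideanSpace ℝ (Fin n) →L[ℝ] EuclideanSpace ℝ (Fin m))
    (x y : EuclideanSpace ℝ (Fin n))
    (h : x + (adjoint L) (L x) = y + (adjoint L) (L y)) : x = y := by
  have hd : (x - y) + (adjoint L) (L (x - y)) = 0 := by
    have e : (x - y) + (adjoint L) (L (x - y))
        = (x + (adjoint L) (L x)) - (y + (adjoint L) (L y)) := by
      simp only [map_sub]; abel
    rw [e, h, sub_self]
  have hinner : (inner ℝ (x - y) (x - y) : ℝ) + inner ℝ (L (x - y)) (L (x - y)) = 0 := by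
    have h2 := congrArg (fun z => (inner ℝ z (x - y) : ℝ)) hd
    simp only [inner_add_left, ContinuousLinearMap.adjoint_inner_left,
      inner_zero_left] at h2
    exact h2
  have h1 : (0:ℝ) ≤ inner ℝ (x - y) (x - y) := real_inner_self_nonneg
  have h2 : (0:ℝ) ≤ (inner ℝ (L (x - y)) (L (x - y)) : ℝ) := real_inner_self_nonneg
  have h3 : (inner ℝ (x - y) (x - y) : ℝ) = 0 := by linarith
  exact sub_eq_zero.mp (inner_self_eq_zero.mp h3)

theorem stmt15 (n m : ℕ)
    (C : Set (EuclideanSpace ℝ (Fin n))) (D : Set (EuclideanSpace ℝ (Fin m)))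
    (hCne : C.Nonempty) (hCcomp : IsCompact C) (hCconv : Convex ℝ C)
    (hDne : D.Nonempty) (hDcomp : IsCompact D) (hDconv : Convex ℝ D)
    (L : EuclideanSpace ℝ (Fin n) →L[ℝ] EuclideanSpace ℝ (Fin m))
    (s : EuclideanSpace ℝ (Fin n)) (b : EuclideanSpace ℝ (Fin m))
    (τ τD : ℝ) (hτ : 0 < τ) (hτD : τD = 1 / τ)
    (PC : EuclideanSpace ℝ (Fin n) → EuclideanSpace ℝ (Fin n))
    (hPC : ∀ y, PC y ∈ C ∧ ∀ x ∈ C, ‖y - PC y‖ ≤ ‖y - x‖)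
    (PD : EuclideanSpace ℝ (Fin m) → EuclideanSpace ℝ (Fin m))
    (hPD : ∀ y, PD y ∈ D ∧ ∀ x ∈ D, ‖y - PD y‖ ≤ ‖y - x‖)
    -- one primal step from (ubar, wbar)
    (ubar u up : EuclideanSpace ℝ (Fin n))
    (wbar wpp wp : EuclideanSpace ℝ (Fin m))
    (hu : u = PC (ubar - τ • s))
    (hwpp : wpp = PD ((1 / τ) • (wbar - b)))
    (hup : up + (ContinuousLinearMap.adjoint L) (L up) =
      ((2 : ℝ) • u - ubar) + (ContinuousLinearMap.adjoint L) (wbar - (2 * τ) • wpp))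
    (hwp : wp = L up)
    -- one dual step from (vbar, zbar)
    (vbar v vp : EuclideanSpace ℝ (Fin m))
    (zbar zpp zp : EuclideanSpace ℝ (Fin n))
    (hv : v = PD (vbar - τD • b))
    (hzpp : zpp = PC ((1 / τD) • (zbar - s)))
    (hvp : vp + L ((ContinuousLinearMap.adjoint L) vp) =
      ((2 : ℝ) • v - vbar) - L (zbar - (2 * τD) • zpp))
    (hzp : zp = -((ContinuousLinearMap.adjoint L) vp))
    -- matching initialization
    (hub : ubar = τ • zbar) (hwb : wbar = τ • vbar) :
    u = zpp ∧ wpp = v ∧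
    ubar + up - u = τ • (zp + τD • zpp) ∧
    wp + τ • wpp = τ • (vbar + vp - v) := by
  have hτ0 : τ ≠ 0 := ne_of_gt hτ
  have hττD : τ * τD = 1 := by rw [hτD]; field_simp
  have hτD0 : τD ≠ 0 := by rw [hτD]; positivity
  -- u = zpp
  have huz : u = zpp := by
    rw [hu, hzpp, hub]
    congr 1
    rw [smul_sub, hτD, one_div_one_div]
  -- wpp = v
  have hwv : wpp = v := by
    rw [hwpp, hv, hwb, hτD]
    congr 1
    rw [smul_sub, smul_smul, one_div, inv_mul_cancel₀ hτ0, one_smul]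
  have h2 : τ * (2 * τD) = 2 := by
    rw [show τ * (2 * τD) = 2 * (τ * τD) by ring, hττD, mul_one]
  open ContinuousLinearMap in
  -- key resolvent identity
  have key : ((2:ℝ) • u - ubar - τ • (adjoint L) vp)
      + (adjoint L) (L ((2:ℝ) • u - ubar - τ • (adjoint L) vp)) =
      ((2:ℝ) • u - ubar) + (adjoint L) (wbar - (2 * τ) • wpp) := by
    rw [hwb, hwv, hub, huz]
    have hT := congrArg (fun x => τ • (adjoint L) x) hvp
    simp only [map_add, map_sub, map_smul, smul_add, smul_sub, smul_smul] at hT ⊢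
    rw [h2] at hT
    linear_combination (norm := module) -hT
  have hup0 : up = (2:ℝ) • u - ubar - τ • (adjoint L) vp := by
    refine aux_inj L up _ ?_
    rw [hup]; exact key.symm
  refine ⟨huz, hwv, ?_, ?_⟩
  · rw [hup0, hub, hzp, huz]
    match_scalars <;> (first | ring1 | linear_combination -hττD | linear_combination (-2:ℝ)*hττD)
  · rw [hwp, hup0, hwv, hub, huz]
    have hS := congrArg (fun x => τ • x) hvp
    simp only [map_add, map_sub, map_smul, smul_add, smul_sub, smul_smul] at hS ⊢
    rw [h2] at hS
    linear_combination (norm := module) -hS
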